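/- arXiv:2303.16729 — 2 statements merged into one kernel-verified Lean document; each statement's English description precedes it below -/
import Mathlib

section
/- Let k ≥ 3 and d ≥ 1 be integers and suppose there exists a binary self-orthogonal [g(k,d), k, d] Griesmer code. Then for every integer N with g(k,d) ≤ N ≤ g(k,d+2): (i) there exists a binary self-orthogonal [N,k] code with minimum distance d, and (ii) every binary self-orthogonal [N,k] code has minimum distance at most d. In other words, d_so(N,k) = d, where d_so(N,k) denotes the largest minimum distance among all binary self-orthogonal [N,k] codes. -/
open Finset

/-- Hamming weight of a binary vector. -/
def wt {ι : Type*} [Fintype ι] (x : ι → ZMod 2) : ℕ :=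
  (Finset.univ.filter fun i => x i ≠ 0).card

/-- A binary linear code is self-orthogonal if any two codewords are orthogonal. -/
def SelfOrthogonal {ι : Type*} [Fintype ι] (C : Submodule (ZMod 2) (ι → ZMod 2)) : Prop :=
  ∀ x ∈ C, ∀ y ∈ C, ∑ i, x i * y i = 0

/-- `C` has minimum distance exactly `d`: some nonzero codeword has weight `d`,
and every nonzero codeword has weight at least `d`. -/
def HasMinDist {ι : Type*} [Fintype ι] (C : Submodule (ZMod 2) (ι → ZMod 2)) (d : ℕ) : Prop :=
  (∃ x ∈ C, x ≠ 0 ∧ wt x = d) ∧ ∀ x ∈ C, x ≠ 0 → d ≤ wt x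

/-- The Griesmer function `g(k,d) = ∑_{i=0}^{k-1} ⌈d/2^i⌉` (ceiling division). -/
def griesmerBound (k d : ℕ) : ℕ :=
  ∑ i ∈ Finset.range k, (d + 2 ^ i - 1) / 2 ^ i

/-! ### griesmerBound lemmas -/

lemma gb_mono (k : ℕ) {d e : ℕ} (h : d ≤ e) : griesmerBound k d ≤ griesmerBound k e :=
  Finset.sum_le_sum fun i _ => Nat.div_le_div_right (by omega)

lemma gb_strict (k : ℕ) (hk : 1 ≤ k) {d e : ℕ} (h : d < e) :
    griesmerBound k d < griesmerBound k e := by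
  apply Finset.sum_lt_sum
  · intro i _; exact Nat.div_le_div_right (by omega)
  · exact ⟨0, Finset.mem_range.mpr hk, by simp; omega⟩

lemma gb_succ (k d : ℕ) (hd : 1 ≤ d) :
    griesmerBound (k+1) d = d + griesmerBound k ((d+1)/2) := by
  rw [griesmerBound, Finset.sum_range_succ', griesmerBound]
  have h0 : (d + 2 ^ 0 - 1) / 2 ^ 0 = d := by simp
  rw [h0, add_comm]
  congr 1
  apply Finset.sum_congr rfl
  intro i _
  have h1 : (0:ℕ) < 2 ^ (i+1) := Nat.pow_pos (by norm_num)
  have h2 : (0:ℕ) < 2 ^ i := Nat.pow_pos (by norm_num)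
  have e1 : d + 2 ^ (i+1) - 1 = (d-1) + 2^(i+1) := by omega
  have e2 : (d+1)/2 = (d-1)/2 + 1 := by omega
  rw [e1, Nat.add_div_right _ h1, e2]
  have e3 : (d-1)/2 + 1 + 2^i - 1 = (d-1)/2 + 2^i := by omega
  rw [e3, Nat.add_div_right _ h2, Nat.div_div_eq_div_mul]
  rw [pow_succ]
  ring_nf

/-! ### ZMod 2 and weight lemmas -/

section Weights
variable {ι : Type*} [Fintype ι] [DecidableEq ι]

lemma wt_le_card (x : ι → ZMod 2) : wt x ≤ Fintype.card ι := by
  classical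
  exact (Finset.card_filter_le _ _).trans (le_of_eq (Finset.card_univ))

lemma wt_eq_zero_iff {x : ι → ZMod 2} : wt x = 0 ↔ x = 0 := by
  classical
  constructor
  · intro h
    funext i
    by_contra hi
    have hmem : i ∈ Finset.univ.filter fun j => x j ≠ 0 :=
      Finset.mem_filter.mpr ⟨Finset.mem_univ _, hi⟩
    rw [wt, Finset.card_eq_zero] at h
    simp [h] at hmem
  · intro h; subst h; simp [wt]

lemma zmod2_add_ne (a b : ZMod 2) : (a + b ≠ 0) ↔ ((a ≠ 0 ∧ b = 0) ∨ (a = 0 ∧ b ≠ 0)) := by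
  revert a b; decide

/-- decomposition of `wt y` along the support of `x` -/
lemma wt_decomp_y (x y : ι → ZMod 2) :
    wt y = (Finset.univ.filter fun i => x i ≠ 0 ∧ y i ≠ 0).card
      + (Finset.univ.filter fun i => x i = 0 ∧ y i ≠ 0).card := by
  classical
  rw [wt]
  rw [← Finset.card_filter_add_card_filter_not (p := fun i => x i ≠ 0)]
  rw [Finset.filter_filter, Finset.filter_filter]
  congr 1
  all_goals exact congrArg Finset.card (Finset.filter_congr fun i _ => by tauto)

lemma wt_decomp_x (x y : ι → ZMod 2) :
    wt x = (Finset.univ.filter fun i => x i ≠ 0 ∧ y i ≠ 0).card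
      + (Finset.univ.filter fun i => x i ≠ 0 ∧ y i = 0).card := by
  classical
  rw [wt]
  rw [← Finset.card_filter_add_card_filter_not (p := fun i => y i ≠ 0)]
  rw [Finset.filter_filter, Finset.filter_filter]
  congr 1
  all_goals exact congrArg Finset.card (Finset.filter_congr fun i _ => by tauto)

lemma wt_decomp_add (x y : ι → ZMod 2) :
    wt (x + y) = (Finset.univ.filter fun i => x i ≠ 0 ∧ y i = 0).card
      + (Finset.univ.filter fun i => x i = 0 ∧ y i ≠ 0).card := by
  classical
  rw [wt]
  rw [← Finset.card_union_of_disjoint (s := Finset.univ.filter fun i => x i ≠ 0 ∧ y i = 0)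
      (t := Finset.univ.filter fun i => x i = 0 ∧ y i ≠ 0) ?_]
  · congr 1
    rw [← Finset.filter_or]
    apply Finset.filter_congr
    intro i _
    simpa using zmod2_add_ne (x i) (y i)
  · rw [Finset.disjoint_filter]
    intro i _ h1 h2
    exact h1.1 h2.1

lemma sum_mul_eq_card (x y : ι → ZMod 2) :
    ∑ i, x i * y i
      = ((Finset.univ.filter fun i => x i ≠ 0 ∧ y i ≠ 0).card : ZMod 2) := by
  classical
  rw [← Finset.sum_filter_add_sum_filter_not Finset.univ (fun i => x i ≠ 0 ∧ y i ≠ 0)]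
  have h1 : ∀ i ∈ Finset.univ.filter fun i => x i ≠ 0 ∧ y i ≠ 0, x i * y i = 1 := by
    intro i hi
    have := (Finset.mem_filter.mp hi).2
    revert this
    have : ∀ a b : ZMod 2, (a ≠ 0 ∧ b ≠ 0) → a * b = 1 := by decide
    exact this (x i) (y i)
  have h2 : ∀ i ∈ Finset.univ.filter fun i => ¬(x i ≠ 0 ∧ y i ≠ 0), x i * y i = 0 := by
    intro i hi
    have := (Finset.mem_filter.mp hi).2
    revert this
    have : ∀ a b : ZMod 2, ¬(a ≠ 0 ∧ b ≠ 0) → a * b = 0 := by decide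
    exact this (x i) (y i)
  rw [Finset.sum_congr rfl h1, Finset.sum_congr rfl h2]
  simp

lemma so_card_even {C : Submodule (ZMod 2) (ι → ZMod 2)} (hso : SelfOrthogonal C)
    {x y : ι → ZMod 2} (hx : x ∈ C) (hy : y ∈ C) :
    2 ∣ (Finset.univ.filter fun i => x i ≠ 0 ∧ y i ≠ 0).card := by
  have h := hso x hx y hy
  rw [sum_mul_eq_card] at h
  exact (ZMod.natCast_eq_zero_iff _ 2).mp h

lemma so_wt_even {C : Submodule (ZMod 2) (ι → ZMod 2)} (hso : SelfOrthogonal C)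
    {x : ι → ZMod 2} (hx : x ∈ C) : 2 ∣ wt x := by
  have h := so_card_even hso hx hx
  have : (Finset.univ.filter fun i => x i ≠ 0 ∧ x i ≠ 0) = Finset.univ.filter fun i => x i ≠ 0 := by
    apply Finset.filter_congr; intro i _; tauto
  rwa [this] at h

lemma exists_minDist (C : Submodule (ZMod 2) (ι → ZMod 2))
    (h : ∃ x, x ∈ C ∧ x ≠ 0) : ∃ d, HasMinDist C d := by
  classical
  obtain ⟨x, hx, hx0⟩ := h
  have hP : ∃ w, ∃ y, y ∈ C ∧ y ≠ 0 ∧ wt y = w := ⟨wt x, x, hx, hx0, rfl⟩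
  refine ⟨Nat.find hP, ?_, ?_⟩
  · obtain ⟨y, hy, hy0, hwy⟩ := Nat.find_spec hP
    exact ⟨y, hy, hy0, hwy⟩
  · intro y hy hy0
    exact Nat.find_min' hP ⟨y, hy, hy0, rfl⟩

end Weights

/-! ### Residual code -/

section Residual
variable {ι : Type*} [Fintype ι] [DecidableEq ι]

def resid (x : ι → ZMod 2) : (ι → ZMod 2) →ₗ[ZMod 2] (ι → ZMod 2) where
  toFun v := fun i => if x i = 0 then v i else 0
  map_add' u v := by funext i; by_cases h : x i = 0 <;> simp [h]
  map_smul' c v := by funext i; by_cases h : x i = 0 <;> simp [h]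

lemma resid_apply (x v : ι → ZMod 2) (i : ι) : resid x v i = if x i = 0 then v i else 0 := rfl

lemma resid_x (x : ι → ZMod 2) : resid x x = 0 := by
  funext i; by_cases h : x i = 0 <;> simp [resid_apply, h]

lemma wt_resid (x v : ι → ZMod 2) :
    wt (resid x v) = (Finset.univ.filter fun i => x i = 0 ∧ v i ≠ 0).card := by
  rw [wt]
  exact congrArg Finset.card (Finset.filter_congr fun i _ => by
    by_cases h : x i = 0 <;> simp [resid_apply, h])

lemma zmod2_one (a : ZMod 2) (h : a ≠ 0) : a = 1 := by revert h; revert a; decide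

lemma residual_step (C : Submodule (ZMod 2) (ι → ZMod 2)) (k d : ℕ)
    (hfr : Module.finrank (ZMod 2) C = k) (hk : 2 ≤ k)
    (hmd : HasMinDist C d) (x : ι → ZMod 2) (hxC : x ∈ C) (hx0 : x ≠ 0) (hwx : wt x = d) :
    ∃ (C' : Submodule (ZMod 2) (ι → ZMod 2)) (d' : ℕ),
      Module.finrank (ZMod 2) C' = k - 1 ∧
      HasMinDist C' d' ∧ (d+1)/2 ≤ d' ∧
      (∀ z ∈ C', ∀ i, x i ≠ 0 → z i = 0) ∧
      (∀ z ∈ C', ∃ y ∈ C, (∀ i, x i = 0 → z i = y i) ∧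
        wt y = (Finset.univ.filter fun i => x i ≠ 0 ∧ y i ≠ 0).card + wt z) := by
  classical
  set π := resid x with hπ
  set C' : Submodule (ZMod 2) (ι → ZMod 2) := C.map π with hC'
  have hd1 : 1 ≤ d := by
    have : wt x ≠ 0 := fun h => hx0 (wt_eq_zero_iff.mp h)
    omega
  -- kernel characterization
  have hker : ∀ y ∈ C, π y = 0 → y = 0 ∨ y = x := by
    intro y hy h
    have hsupp : ∀ i, x i = 0 → y i = 0 := by
      intro i hi
      have := congrFun h i
      simpa [hπ, resid_apply, hi] using this
    by_cases hy0 : y = 0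
    · exact Or.inl hy0
    right
    have hcle : (Finset.univ.filter fun i => y i ≠ 0) ⊆ (Finset.univ.filter fun i => x i ≠ 0) := by
      intro i hi
      rw [Finset.mem_filter] at hi ⊢
      refine ⟨hi.1, fun hxi => hi.2 (hsupp i hxi)⟩
    have h1 : wt y ≤ wt x := Finset.card_le_card hcle
    have h2 : d ≤ wt y := hmd.2 y hy hy0
    have heq : (Finset.univ.filter fun i => y i ≠ 0) = (Finset.univ.filter fun i => x i ≠ 0) :=
      Finset.eq_of_subset_of_card_le hcle (by rw [wt] at h2 hwx; omega)
    funext i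
    by_cases hxi : x i = 0
    · rw [hxi]; exact hsupp i hxi
    · have hmem : i ∈ Finset.univ.filter fun i => x i ≠ 0 :=
        Finset.mem_filter.mpr ⟨Finset.mem_univ _, hxi⟩
      rw [← heq, Finset.mem_filter] at hmem
      rw [zmod2_one _ hmem.2, zmod2_one _ hxi]
  -- rank computation
  have hπx : π x = 0 := resid_x x
  set f : C →ₗ[ZMod 2] (ι → ZMod 2) := π ∘ₗ C.subtype with hf
  have hrange : LinearMap.range f = C' := by
    rw [hf, LinearMap.range_comp, Submodule.range_subtype]
  have hkerf : LinearMap.ker f = Submodule.span (ZMod 2) {(⟨x, hxC⟩ : C)} := by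
    ext y
    obtain ⟨y, hy⟩ := y
    rw [LinearMap.mem_ker, Submodule.mem_span_singleton]
    constructor
    · intro h
      have h' : π y = 0 := h
      rcases hker y hy h' with h0 | hx
      · exact ⟨0, by ext; simp [h0]⟩
      · exact ⟨1, by ext; simp [hx]⟩
    · rintro ⟨c, hc⟩
      have : y = c • x := by
        have := congrArg Subtype.val hc
        simpa using this.symm
      show π y = 0
      rw [this, map_smul, hπx, smul_zero]
  have hxne : (⟨x, hxC⟩ : C) ≠ 0 := fun h => hx0 (congrArg Subtype.val h)
  have hker1 : Module.finrank (ZMod 2) (LinearMap.ker f) = 1 := by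
    rw [hkerf]; exact finrank_span_singleton hxne
  have hrk := LinearMap.finrank_range_add_finrank_ker f
  rw [hrange, hker1, hfr] at hrk
  have hfr' : Module.finrank (ZMod 2) C' = k - 1 := by omega
  -- C' has a nonzero element
  have hne : ∃ z, z ∈ C' ∧ z ≠ 0 := by
    by_contra h
    push_neg at h
    have : C' = ⊥ := by
      rw [Submodule.eq_bot_iff]
      intro z hz
      exact h z hz
    rw [this, finrank_bot] at hfr'
    omega
  obtain ⟨d', hmd'⟩ := exists_minDist C' hne
  -- preimage facts
  have hpre : ∀ z ∈ C', ∃ y ∈ C, (∀ i, x i = 0 → z i = y i) ∧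
      wt y = (Finset.univ.filter fun i => x i ≠ 0 ∧ y i ≠ 0).card + wt z := by
    intro z hz
    obtain ⟨y, hy, hyz⟩ := Submodule.mem_map.mp hz
    refine ⟨y, hy, ?_, ?_⟩
    · intro i hi
      rw [← hyz, resid_apply, if_pos hi]
    · rw [← hyz, wt_resid, wt_decomp_y x y]
  have hvan : ∀ z ∈ C', ∀ i, x i ≠ 0 → z i = 0 := by
    intro z hz i hi
    obtain ⟨y, hy, hyz⟩ := Submodule.mem_map.mp hz
    rw [← hyz, resid_apply, if_neg hi]
  -- lower bound on d'
  have hd'lb : (d+1)/2 ≤ d' := by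
    obtain ⟨z, hz, hz0, hwz⟩ := hmd'.1
    obtain ⟨y, hy, hyz⟩ := Submodule.mem_map.mp hz
    have hy0 : y ≠ 0 := by rintro rfl; rw [map_zero] at hyz; exact hz0 hyz.symm
    have hxy0 : x + y ≠ 0 := by
      intro h
      have : π (x + y) = z := by rw [map_add, hπx, zero_add, hyz]
      rw [h, map_zero] at this
      exact hz0 this.symm
    have hwz' : wt z = (Finset.univ.filter fun i => x i = 0 ∧ y i ≠ 0).card := by
      rw [← hyz, wt_resid]
    have e1 := wt_decomp_y x y
    have e2 := wt_decomp_add x y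
    have e3 := wt_decomp_x x y
    have h1 : d ≤ wt y := hmd.2 y hy hy0
    have h2 : d ≤ wt (x + y) := hmd.2 _ (C.add_mem hxC hy) hxy0
    rw [hwx] at e3
    omega
  exact ⟨C', d', hfr', hmd', hd'lb, hvan, hpre⟩

end Residual

/-! ### Griesmer bound -/

lemma griesmer_aux : ∀ (k : ℕ), 1 ≤ k → ∀ {ι : Type*} [Fintype ι] [DecidableEq ι]
    (C : Submodule (ZMod 2) (ι → ZMod 2)), Module.finrank (ZMod 2) C = k →
    ∀ d, HasMinDist C d → ∀ T : Finset ι, (∀ y ∈ C, ∀ i ∈ T, y i = 0) →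
    griesmerBound k d + T.card ≤ Fintype.card ι := by
  intro k
  induction k with
  | zero => omega
  | succ k ih =>
    intro _ ι _ _ C hfr d hmd T hT
    classical
    obtain ⟨x, hxC, hx0, hwx⟩ := hmd.1
    have hd1 : 1 ≤ d := by
      have : wt x ≠ 0 := fun h => hx0 (wt_eq_zero_iff.mp h)
      omega
    have hST : Disjoint (Finset.univ.filter fun i => x i ≠ 0) T := by
      rw [Finset.disjoint_right]
      intro i hi hmem
      exact (Finset.mem_filter.mp hmem).2 (hT x hxC i hi)
    have hcard : d + T.card ≤ Fintype.card ι := by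
      have h1 : ((Finset.univ.filter fun i => x i ≠ 0) ∪ T).card ≤ Fintype.card ι := by
        rw [← Finset.card_univ]
        exact Finset.card_le_card (Finset.subset_univ _)
      rw [Finset.card_union_of_disjoint hST] at h1
      rw [wt] at hwx
      omega
    rcases Nat.eq_zero_or_pos k with hk0 | hk1
    · subst hk0
      have : griesmerBound 1 d = d := by
        rw [griesmerBound, Finset.sum_range_one]; simp
      rw [this]
      exact hcard
    · obtain ⟨C', d', hfr', hmd', hd'lb, hvan, hpre⟩ :=
        residual_step C (k+1) d hfr (by omega) hmd x hxC hx0 hwx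
      have hT' : ∀ z ∈ C', ∀ i ∈ (Finset.univ.filter fun i => x i ≠ 0) ∪ T, z i = 0 := by
        intro z hz i hi
        rcases Finset.mem_union.mp hi with hi | hi
        · exact hvan z hz i (Finset.mem_filter.mp hi).2
        · by_cases hxi : x i = 0
          · obtain ⟨y, hy, hzy, -⟩ := hpre z hz
            rw [hzy i hxi]
            exact hT y hy i hi
          · exact hvan z hz i hxi
      have hfr'' : Module.finrank (ZMod 2) C' = k := by omega
      have hmain := ih hk1 C' hfr'' d' hmd' _ hT'
      rw [Finset.card_union_of_disjoint hST] at hmain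
      rw [wt] at hwx
      have hmono : griesmerBound k ((d+1)/2) ≤ griesmerBound k d' := gb_mono k hd'lb
      have hrec : griesmerBound (k+1) d = d + griesmerBound k ((d+1)/2) := gb_succ k d hd1
      omega

/-- no self-orthogonal Griesmer code with `d ≡ 2 (mod 4)` and `k ≥ 2` -/
lemma no_so_griesmer {ι : Type*} [Fintype ι] [DecidableEq ι] (k D : ℕ) (hk : 2 ≤ k)
    (hD : D % 4 = 2) (hcard : Fintype.card ι = griesmerBound k D)
    (C : Submodule (ZMod 2) (ι → ZMod 2)) (hfr : Module.finrank (ZMod 2) C = k)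
    (hso : SelfOrthogonal C) (hmd : HasMinDist C D) : False := by
  classical
  obtain ⟨x, hxC, hx0, hwx⟩ := hmd.1
  obtain ⟨C', d', hfr', hmd', hd'lb, hvan, hpre⟩ :=
    residual_step C k D hfr hk hmd x hxC hx0 hwx
  -- apply Griesmer bound to C' with T = supp x
  have hT : ∀ z ∈ C', ∀ i ∈ (Finset.univ.filter fun i => x i ≠ 0), z i = 0 := by
    intro z hz i hi
    exact hvan z hz i (Finset.mem_filter.mp hi).2
  have hbound := griesmer_aux (k-1) (by omega) C' hfr' d' hmd' _ hT
  have hSc : (Finset.univ.filter fun i => x i ≠ 0).card = D := by rw [← wt]; exact hwx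
  rw [hSc, hcard] at hbound
  -- rewrite griesmerBound k D
  have hrec : griesmerBound k D = D + griesmerBound (k-1) ((D+1)/2) := by
    have : k = (k-1) + 1 := by omega
    rw [this, gb_succ (k-1) D (by omega)]
    simp
  rw [hrec] at hbound
  have hle : griesmerBound (k-1) d' ≤ griesmerBound (k-1) ((D+1)/2) := by omega
  have hd'ub : d' ≤ (D+1)/2 := by
    by_contra h
    push_neg at h
    exact absurd hle (not_le.mpr (gb_strict (k-1) (by omega) h))
  have hd'eq : d' = D/2 := by omega
  -- extract minimum-weight residual word and derive parity contradiction
  obtain ⟨z, hz, hz0, hwz⟩ := hmd'.1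
  obtain ⟨y, hy, -, hrel⟩ := hpre z hz
  have hyeven := so_wt_even hso hy
  have hceven := so_card_even hso hxC hy
  rw [hrel] at hyeven
  -- wt z = d' = D/2 is odd since D % 4 = 2
  omega


/-! ### Padding -/

def padMap (n m : ℕ) : (Fin n → ZMod 2) →ₗ[ZMod 2] (Fin (n+m) → ZMod 2) where
  toFun v := Fin.append v 0
  map_add' u v := by
    funext i
    refine Fin.addCases (fun j => ?_) (fun j => ?_) i <;>
      simp [Fin.append_left, Fin.append_right]
  map_smul' c v := by
    funext i
    refine Fin.addCases (fun j => ?_) (fun j => ?_) i <;>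
      simp [Fin.append_left, Fin.append_right]

lemma padMap_apply (n m : ℕ) (v : Fin n → ZMod 2) :
    padMap n m v = Fin.append v 0 := rfl

lemma wt_pad (n m : ℕ) (v : Fin n → ZMod 2) : wt (padMap n m v) = wt v := by
  rw [wt, wt, Finset.card_filter, Finset.card_filter, Fin.sum_univ_add]
  simp [padMap_apply, Fin.append_left, Fin.append_right]

lemma pad_inj (n m : ℕ) : Function.Injective (padMap n m) := by
  intro u v h
  funext i
  have := congrFun h (Fin.castAdd m i)
  simpa [padMap_apply, Fin.append_left] using this

lemma pad_sum (n m : ℕ) (u v : Fin n → ZMod 2) :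
    ∑ i, padMap n m u i * padMap n m v i = ∑ i, u i * v i := by
  rw [Fin.sum_univ_add]
  simp [padMap_apply, Fin.append_left, Fin.append_right]

lemma pad_code (n m k d : ℕ) (C : Submodule (ZMod 2) (Fin n → ZMod 2))
    (hfr : Module.finrank (ZMod 2) C = k) (hso : SelfOrthogonal C)
    (hmd : HasMinDist C d) :
    ∃ C' : Submodule (ZMod 2) (Fin (n+m) → ZMod 2),
      Module.finrank (ZMod 2) C' = k ∧ SelfOrthogonal C' ∧ HasMinDist C' d := by
  classical
  refine ⟨C.map (padMap n m), ?_, ?_, ?_, ?_⟩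
  · rw [← hfr]
    exact (Submodule.equivMapOfInjective _ (pad_inj n m) C).finrank_eq.symm
  · intro z hz w hw
    obtain ⟨y, hy, rfl⟩ := Submodule.mem_map.mp hz
    obtain ⟨y', hy', rfl⟩ := Submodule.mem_map.mp hw
    rw [pad_sum]
    exact hso y hy y' hy'
  · obtain ⟨x, hx, hx0, hwx⟩ := hmd.1
    refine ⟨padMap n m x, Submodule.mem_map_of_mem hx, ?_, by rw [wt_pad]; exact hwx⟩
    intro h
    exact hx0 (pad_inj n m (by rw [h, map_zero]))
  · intro z hz hz0
    obtain ⟨y, hy, rfl⟩ := Submodule.mem_map.mp hz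
    have hy0 : y ≠ 0 := by rintro rfl; rw [map_zero] at hz0; exact hz0 rfl
    rw [wt_pad]
    exact hmd.2 y hy hy0

/-! ### Main theorem -/

theorem stmt6 (k d : ℕ) (hk : 3 ≤ k) (hd : 1 ≤ d)
    (hex : ∃ C : Submodule (ZMod 2) (Fin (griesmerBound k d) → ZMod 2),
      Module.finrank (ZMod 2) C = k ∧ SelfOrthogonal C ∧ HasMinDist C d) :
    ∀ N : ℕ, griesmerBound k d ≤ N → N ≤ griesmerBound k (d + 2) →
      (∃ C : Submodule (ZMod 2) (Fin N → ZMod 2),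
        Module.finrank (ZMod 2) C = k ∧ SelfOrthogonal C ∧ HasMinDist C d) ∧
      (∀ C : Submodule (ZMod 2) (Fin N → ZMod 2),
        Module.finrank (ZMod 2) C = k → SelfOrthogonal C →
        ∀ e : ℕ, HasMinDist C e → e ≤ d) := by
  intro N hN1 hN2
  obtain ⟨C₀, hfr₀, hso₀, hmd₀⟩ := hex
  have hdeven : 2 ∣ d := by
    obtain ⟨x, hx, hx0, hwx⟩ := hmd₀.1
    rw [← hwx]
    exact so_wt_even hso₀ hx
  constructor
  · obtain ⟨m, rfl⟩ := Nat.exists_eq_add_of_le hN1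
    exact pad_code _ m k d C₀ hfr₀ hso₀ hmd₀
  · intro C hfr hso e hmd
    by_contra hlt
    push_neg at hlt
    have heeven : 2 ∣ e := by
      obtain ⟨x, hx, hx0, hwx⟩ := hmd.1
      rw [← hwx]
      exact so_wt_even hso hx
    have he2 : d + 2 ≤ e := by omega
    have hgb : griesmerBound k e ≤ N := by
      have := griesmer_aux k (by omega) C hfr e hmd ∅ (by simp)
      simpa using this
    have hmono : griesmerBound k (d+2) ≤ griesmerBound k e := gb_mono k he2
    have heeq : e = d + 2 := by
      by_contra h
      have : d + 2 < e := by omega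
      have := gb_strict k (by omega) this
      omega
    have hNeq : N = griesmerBound k (d+2) := by omega
    rcases (by omega : d % 4 = 0 ∨ d % 4 = 2) with h4 | h4
    · -- d+2 ≡ 2 mod 4 : contradiction with C itself
      subst heeq
      exact no_so_griesmer k (d+2) (by omega) (by omega)
        (by rw [Fintype.card_fin]; exact hNeq) C hfr hso hmd
    · -- d ≡ 2 mod 4 : contradiction with the hypothesis code
      exact no_so_griesmer k d (by omega) h4
        (by rw [Fintype.card_fin]) C₀ hfr₀ hso₀ hmd₀
end

section
/- There is no binary self-orthogonal [61,6,30] code; that is, no 6-dimensional self-orthogonal subspace of F_2^61 has minimum distance 30. -/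
open Finset

abbrev V6 : Type := Fin 6 → ZMod 2

def dot (f v : V6) : ZMod 2 := ∑ j, f j * v j

lemma dot_add_left (f g v : V6) : dot (f + g) v = dot f v + dot g v := by
  simp [dot, add_mul, Finset.sum_add_distrib]

lemma dot_comm (f v : V6) : dot f v = dot v f := by
  simp [dot, mul_comm]

def delta (j : Fin 6) : V6 := fun k => if k = j then 1 else 0

lemma dot_delta (j : Fin 6) (v : V6) : dot (delta j) v = v j := by
  simp [dot, delta, ite_mul]

lemma V6_add_add_cancel (f r : V6) : f + r + r = f := by
  funext k
  have : ∀ a b : ZMod 2, a + b + b = a := by decide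
  exact this (f k) (r k)

lemma card_univ_V6 : (univ : Finset V6).card = 64 := by
  simp [Fintype.card_fun]

lemma key3 : ∀ ua ub uc va vb vc wa wb wc : ZMod 2, ua ≠ ub → va ≠ vc → wb ≠ wc →
    ∃ s1 s2 s3 t1 t2 t3 : ZMod 2,
      ((s1*ua + s2*va + s3*wa) + (s1*ub + s2*vb + s3*wb) + (s1*uc + s2*vc + s3*wc)) *
      ((t1*ua + t2*va + t3*wa) + (t1*ub + t2*vb + t3*wb) + (t1*uc + t2*vc + t3*wc))
      ≠ (s1*ua+s2*va+s3*wa)*(t1*ua+t2*va+t3*wa) + (s1*ub+s2*vb+s3*wb)*(t1*ub+t2*vb+t3*wb)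
        + (s1*uc+s2*vc+s3*wc)*(t1*uc+t2*vc+t3*wc) := by decide

lemma card_flip (p q : V6 → Prop) [DecidablePred p] [DecidablePred q] (r : V6)
    (hp : ∀ f, p (f + r) ↔ p f) (hq : ∀ f, q (f + r) ↔ ¬ q f) :
    (univ.filter fun f => p f ∧ q f).card = (univ.filter fun f => p f ∧ ¬ q f).card := by
  apply Finset.card_nbij' (i := fun f => f + r) (j := fun f => f + r)
  · intro f hf
    simp only [mem_coe, mem_filter, mem_univ, true_and] at hf ⊢
    exact ⟨(hp f).mpr hf.1, fun hcon => ((hq f).mp hcon) hf.2⟩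
  · intro f hf
    simp only [mem_coe, mem_filter, mem_univ, true_and] at hf ⊢
    exact ⟨(hp f).mpr hf.1, (hq f).mpr hf.2⟩
  · intro f _; exact V6_add_add_cancel f r
  · intro f _; exact V6_add_add_cancel f r

lemma card_split (p q : V6 → Prop) [DecidablePred p] [DecidablePred q] :
    (univ.filter p).card
      = (univ.filter fun f => p f ∧ q f).card + (univ.filter fun f => p f ∧ ¬ q f).card := by
  rw [← Finset.filter_filter, ← Finset.filter_filter]
  exact (Finset.card_filter_add_card_filter_not (s := univ.filter p) (p := q)).symm

lemma card_eq32 (φ : V6 → ZMod 2) (hadd : ∀ f g, φ (f + g) = φ f + φ g) (r : V6)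
    (hr : φ r = 1) : (univ.filter fun f => φ f = 1).card = 32 := by
  have h1 : ∀ f, φ (f + r) = φ f + 1 := fun f => by rw [hadd, hr]
  have hflip := card_flip (fun _ => True) (fun f => φ f = 1) r (fun f => Iff.rfl)
    (fun f => by
      show φ (f + r) = 1 ↔ ¬ (φ f = 1)
      rw [h1]
      constructor
      · intro h h2; rw [h2] at h; exact one_ne_zero (by linear_combination h)
      · intro h
        have : ∀ a : ZMod 2, a ≠ 1 → a + 1 = 1 := by decide
        exact this _ h)
  have hsplit := card_split (fun _ => True) (fun f => φ f = 1)
  simp only [true_and, Finset.filter_true] at hflip hsplit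
  rw [card_univ_V6] at hsplit
  omega

lemma count_one (v : V6) (hv : v ≠ 0) : (univ.filter fun f => dot f v = 1).card = 32 := by
  obtain ⟨j, hj⟩ := Function.ne_iff.mp hv
  simp only [Pi.zero_apply] at hj
  have hj1 : v j = 1 := by
    have : ∀ a : ZMod 2, a ≠ 0 → a = 1 := by decide
    exact this _ hj
  exact card_eq32 (fun f => dot f v) (fun f g => dot_add_left f g v) (delta j)
    (by show dot (delta j) v = 1; rw [dot_delta, hj1])

lemma zmod2_eq_one {a : ZMod 2} (h : a ≠ 0) : a = 1 := by revert h; revert a; decide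
lemma zmod2_eq_zero {a : ZMod 2} (h : a ≠ 1) : a = 0 := by revert h; revert a; decide

lemma exists_r (u v : V6) (hv : v ≠ 0) (huv : u ≠ v) :
    ∃ r : V6, dot r u = 0 ∧ dot r v = 1 := by
  obtain ⟨j, hj⟩ := Function.ne_iff.mp huv
  by_cases hu0 : u j = 0
  · refine ⟨delta j, by rw [dot_delta, hu0], ?_⟩
    rw [dot_delta]
    exact zmod2_eq_one (fun h => hj (by rw [hu0, h]))
  · have hu1 : u j = 1 := zmod2_eq_one hu0
    have hv0 : v j = 0 := zmod2_eq_zero (by intro h; exact hj (by rw [hu1, h]))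
    obtain ⟨k, hk⟩ := Function.ne_iff.mp hv
    simp only [Pi.zero_apply] at hk
    have hk1 : v k = 1 := zmod2_eq_one hk
    by_cases huk : u k = 0
    · exact ⟨delta k, by rw [dot_delta, huk], by rw [dot_delta, hk1]⟩
    · refine ⟨delta k + delta j, ?_, ?_⟩
      · rw [dot_add_left, dot_delta, dot_delta, zmod2_eq_one huk, hu1]; decide
      · rw [dot_add_left, dot_delta, dot_delta, hk1, hv0]; decide

lemma count_pair (u v : V6) (hu : u ≠ 0) (hv : v ≠ 0) (huv : u ≠ v) :
    (univ.filter fun f => dot f u = 1 ∧ dot f v = 1).card = 16 := by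
  obtain ⟨r, hru, hrv⟩ := exists_r u v hv huv
  have hflip := card_flip (fun f => dot f u = 1) (fun f => dot f v = 1) r
    (fun f => by show dot (f + r) u = 1 ↔ _; rw [dot_add_left, hru, add_zero])
    (fun f => by
      show dot (f + r) v = 1 ↔ ¬ (dot f v = 1)
      rw [dot_add_left, hrv]
      have : ∀ a : ZMod 2, (a + 1 = 1 ↔ ¬ (a = 1)) := by decide
      exact this _)
  have hsplit' : (univ.filter fun f => dot f u = 1).card
      = (univ.filter fun f => dot f u = 1 ∧ dot f v = 1).card
        + (univ.filter fun f => dot f u = 1 ∧ ¬ (dot f v = 1)).card :=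
    card_split (fun f => dot f u = 1) (fun f => dot f v = 1)
  have hflip' : (univ.filter fun f => dot f u = 1 ∧ dot f v = 1).card
      = (univ.filter fun f => dot f u = 1 ∧ ¬ (dot f v = 1)).card := hflip
  rw [count_one u hu] at hsplit'
  omega

lemma wt_eq_sum {ι : Type*} [Fintype ι] (x : ι → ZMod 2) :
    wt x = ∑ i, (if x i = 1 then 1 else 0) := by
  have h : ∀ a : ZMod 2, (a ≠ 0) ↔ (a = 1) := by decide
  rw [wt]
  have h2 : (univ.filter fun i => x i ≠ 0) = (univ.filter fun i => x i = 1) :=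
    Finset.filter_congr (fun i _ => by simp [h])
  rw [h2, Finset.card_filter]

lemma wt_add {ι : Type*} [Fintype ι] (x y : ι → ZMod 2) :
    wt x + wt y = wt (x + y) + 2 * (univ.filter fun i => x i = 1 ∧ y i = 1).card := by
  have key : ∀ a b : ZMod 2, ((if a = 1 then 1 else 0) + (if b = 1 then 1 else 0) : ℕ)
      = (if a + b = 1 then 1 else 0) + 2 * (if a = 1 ∧ b = 1 then 1 else 0) := by decide
  rw [wt_eq_sum, wt_eq_sum, wt_eq_sum, Finset.card_filter, ← Finset.sum_add_distrib,
    Finset.mul_sum, ← Finset.sum_add_distrib]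
  exact Finset.sum_congr rfl (fun i _ => by simpa using key (x i) (y i))

lemma wt_cast {ι : Type*} [Fintype ι] (x : ι → ZMod 2) :
    ((wt x : ℕ) : ZMod 2) = ∑ i, x i := by
  rw [wt_eq_sum, Nat.cast_sum]
  refine Finset.sum_congr rfl (fun i _ => ?_)
  by_cases h1 : x i = 1
  · simp [h1]
  · simp [h1, zmod2_eq_zero h1]

lemma ov_cast {ι : Type*} [Fintype ι] (x y : ι → ZMod 2) :
    (((univ.filter fun i => x i = 1 ∧ y i = 1).card : ℕ) : ZMod 2) = ∑ i, x i * y i := by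
  rw [Finset.card_filter, Nat.cast_sum]
  refine Finset.sum_congr rfl (fun i _ => ?_)
  by_cases h1 : x i = 1
  · by_cases h2 : y i = 1
    · simp [h1, h2]
    · simp [h1, h2, zmod2_eq_zero h2]
  · simp [h1, zmod2_eq_zero h1]

lemma force_ge {α : Type*} (s : Finset α) (F : α → ℕ) (m : ℕ) (h : ∀ a ∈ s, m ≤ F a)
    (he : ∑ a ∈ s, F a = s.card * m) : ∀ a ∈ s, F a = m := by
  intro a ha
  by_contra hne
  have hlt : ∑ _x ∈ s, m < ∑ x ∈ s, F x :=
    Finset.sum_lt_sum h ⟨a, ha, lt_of_le_of_ne (h a ha) (Ne.symm hne)⟩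
  rw [Finset.sum_const, smul_eq_mul] at hlt
  omega

lemma force_le {α : Type*} (s : Finset α) (F : α → ℕ) (m : ℕ) (h : ∀ a ∈ s, F a ≤ m)
    (he : ∑ a ∈ s, F a = s.card * m) : ∀ a ∈ s, F a = m := by
  intro a ha
  by_contra hne
  have hlt : ∑ x ∈ s, F x < ∑ _x ∈ s, m :=
    Finset.sum_lt_sum h ⟨a, ha, lt_of_le_of_ne (h a ha) hne⟩
  rw [Finset.sum_const, smul_eq_mul] at hlt
  omega

lemma dot_zero_left (v : V6) : dot 0 v = 0 := by simp [dot]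
lemma dot_zero_right (f : V6) : dot f 0 = 0 := by simp [dot]
lemma dot_add_right (f x y : V6) : dot f (x + y) = dot f x + dot f y := by
  simp [dot, mul_add, Finset.sum_add_distrib]

lemma natCast_zmod2_zero {n : ℕ} (h : 2 ∣ n) : ((n : ℕ) : ZMod 2) = 0 :=
  (ZMod.natCast_eq_zero_iff n 2).mpr h

lemma sum_cast_card {ι : Type*} [Fintype ι] (x : ι → ZMod 2) :
    (((univ.filter fun i => x i = 1).card : ℕ) : ZMod 2) = ∑ i, x i := by
  rw [Finset.card_filter, Nat.cast_sum]
  refine Finset.sum_congr rfl (fun i _ => ?_)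
  by_cases h1 : x i = 1
  · simp [h1]
  · simp [h1, zmod2_eq_zero h1]

lemma dot_combo (s1 s2 s3 : ZMod 2) (j1 j2 j3 : Fin 6) (v : V6) :
    dot (fun k => s1 * delta j1 k + s2 * delta j2 k + s3 * delta j3 k) v
      = s1 * v j1 + s2 * v j2 + s3 * v j3 := by
  simp only [dot, delta, add_mul, Finset.sum_add_distrib, ite_mul, one_mul, zero_mul,
    mul_ite, mul_zero, mul_one, Finset.sum_ite_eq', Finset.mem_univ, if_true]

lemma v6_cancel {x y : V6} (hxy : x + y = 0) : y = x := by
  funext k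
  have hk : x k + y k = 0 := by
    have := congrFun hxy k
    simpa using this
  revert hk
  have : ∀ u w : ZMod 2, u + w = 0 → w = u := by decide
  exact this _ _

lemma zmod2_cancel {x y : ZMod 2} (hxy : x + y = 0) : y = x := by
  revert hxy; revert x y; decide

def Wf (h : Fin 61 → V6) (f : V6) : ℕ := wt fun i => dot f (h i)

def Psi (h : Fin 61 → V6) (f : V6) : ZMod 2 := ((Wf h f / 2 : ℕ) : ZMod 2)

section CoreLemmas
variable (h : Fin 61 → V6)
variable (hso : ∀ f g : V6, (∑ i, dot f (h i) * dot g (h i)) = 0)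

include hso in
lemma W_even (f : V6) : 2 ∣ Wf h f := by
  have h1 : ((Wf h f : ℕ) : ZMod 2) = ∑ i, dot f (h i) := wt_cast _
  have h2 : ∀ a : ZMod 2, a = a * a := by decide
  have h3 : ((Wf h f : ℕ) : ZMod 2) = 0 := by
    rw [h1]
    rw [Finset.sum_congr rfl (fun i _ => h2 (dot f (h i)))]
    exact hso f f
  exact (ZMod.natCast_eq_zero_iff _ 2).mp h3

include hso in
lemma ov_even (f g : V6) :
    2 ∣ (univ.filter fun i => dot f (h i) = 1 ∧ dot g (h i) = 1).card := by
  apply (ZMod.natCast_eq_zero_iff _ 2).mp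
  rw [ov_cast]
  exact hso f g

include hso in
lemma Psi_add (f g : V6) : Psi h (f + g) = Psi h f + Psi h g := by
  obtain ⟨A, hA⟩ := W_even h hso f
  obtain ⟨B, hB⟩ := W_even h hso g
  obtain ⟨Cc, hC⟩ := W_even h hso (f + g)
  obtain ⟨D, hD⟩ := ov_even h hso f g
  have hadd : Wf h f + Wf h g = Wf h (f + g)
      + 2 * (univ.filter fun i => dot f (h i) = 1 ∧ dot g (h i) = 1).card := by
    have := wt_add (fun i => dot f (h i)) (fun i => dot g (h i))
    have hfg : (fun i => dot (f + g) (h i)) = (fun i => dot f (h i)) + (fun i => dot g (h i)) :=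
      funext fun i => dot_add_left f g (h i)
    rw [Wf, Wf, Wf, hfg]
    exact this
  have hnat : A + B = Cc + 2 * D := by omega
  have hcast := congrArg (fun n : ℕ => (n : ZMod 2)) hnat
  push_cast at hcast
  have h2 : (2 : ZMod 2) = 0 := by decide
  rw [h2, zero_mul, add_zero] at hcast
  have hdiv : ∀ (n m : ℕ), n = 2 * m → n / 2 = m := fun n m hh => by omega
  rw [Psi, Psi, Psi, hdiv _ _ hA, hdiv _ _ hB, hdiv _ _ hC]
  rw [← hcast]

end CoreLemmas

set_option maxRecDepth 100000 in
lemma core (h : Fin 61 → V6)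
    (hso : ∀ f g : V6, (∑ i, dot f (h i) * dot g (h i)) = 0)
    (hmin : ∀ f : V6, f ≠ 0 → 30 ≤ Wf h f)
    (hex : ∃ f : V6, f ≠ 0 ∧ Wf h f = 30) : False := by
  classical
  obtain ⟨f0, hf0ne, hf0wt⟩ := hex
  have hW0 : Wf h 0 = 0 := by
    have : (fun i => dot (0 : V6) (h i)) = fun _ => 0 := funext fun i => dot_zero_left (h i)
    rw [Wf, this]
    simp [wt]
  have hPsi0 : Psi h 0 = 0 := by rw [Psi, hW0]; rfl
  have hPsif0 : Psi h f0 = 1 := by rw [Psi, hf0wt]; decide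
  have hPsiadd := Psi_add h hso
  -- cardinalities
  set T1 := univ.filter fun f : V6 => Psi h f = 1 with hT1def
  set T0 := univ.filter fun f : V6 => ¬ Psi h f = 1 ∧ f ≠ 0 with hT0def
  have hcard1 : T1.card = 32 := by
    rw [hT1def]
    exact card_eq32 (Psi h) hPsiadd f0 hPsif0
  have hcard_not1 : (univ.filter fun f : V6 => ¬ Psi h f = 1).card = 32 := by
    have hthis := Finset.card_filter_add_card_filter_not (s := (univ : Finset V6))
      (p := fun f => Psi h f = 1)
    rw [card_univ_V6, ← hT1def, hcard1] at hthis
    omega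
  have hcard0 : T0.card = 31 := by
    have hz2 : T0 = (univ.filter fun f : V6 => ¬ Psi h f = 1).erase 0 := by
      rw [hT0def]
      ext f
      simp only [mem_filter, mem_univ, true_and, mem_erase]
      tauto
    have h0mem : (0 : V6) ∈ univ.filter fun f : V6 => ¬ Psi h f = 1 := by
      simp only [mem_filter, mem_univ, true_and]
      rw [hPsi0]
      decide
    rw [hz2, Finset.card_erase_of_mem h0mem, hcard_not1]
  -- bounds
  have hb1 : ∀ f ∈ T1, 30 ≤ Wf h f := by
    intro f hf
    rw [hT1def, mem_filter] at hf
    have hne : f ≠ 0 := by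
      rintro rfl
      rw [hPsi0] at hf
      exact absurd hf.2 (by decide)
    exact hmin f hne
  have hb0 : ∀ f ∈ T0, 32 ≤ Wf h f := by
    intro f hf
    rw [hT0def, mem_filter] at hf
    obtain ⟨-, hnot1, hne⟩ := hf
    have h30 := hmin f hne
    have heven := W_even h hso f
    have hne30 : Wf h f ≠ 30 := by
      intro hcon
      apply hnot1
      rw [Psi, hcon]
      decide
    omega
  -- first moment, upper bound
  have hWsum : ∀ f : V6, Wf h f = ∑ i, (if dot f (h i) = 1 then 1 else 0) := by
    intro f; exact wt_eq_sum _
  have hcnt : ∀ i, (univ.filter fun f : V6 => dot f (h i) = 1).card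
      = (if h i = 0 then 0 else 32) := by
    intro i
    by_cases hz : h i = 0
    · rw [if_pos hz]
      rw [Finset.card_eq_zero, Finset.filter_eq_empty_iff]
      intro f _
      rw [hz, dot_zero_right]
      decide
    · rw [if_neg hz]; exact count_one (h i) hz
  have hAswap : ∑ f : V6, Wf h f
      = ∑ i, (univ.filter fun f : V6 => dot f (h i) = 1).card := by
    rw [Finset.sum_congr rfl (fun f _ => hWsum f), Finset.sum_comm]
    exact Finset.sum_congr rfl (fun i _ => (Finset.card_filter _ _).symm)
  have hA_le : ∑ f : V6, Wf h f ≤ 1952 := by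
    rw [hAswap]
    calc ∑ i, (univ.filter fun f : V6 => dot f (h i) = 1).card
        ≤ ∑ _i : Fin 61, 32 := Finset.sum_le_sum (fun i _ => by
          rw [hcnt i]; split <;> omega)
      _ = 1952 := by simp
  -- first moment, lower bound decomposition
  have hdecomp : ∑ f : V6, Wf h f = ∑ f ∈ T1, Wf h f + ∑ f ∈ T0, Wf h f := by
    have h1 : ∑ f : V6, Wf h f
        = ∑ f ∈ T1, Wf h f + ∑ f ∈ univ.filter (fun f : V6 => ¬ Psi h f = 1), Wf h f :=
      (Finset.sum_filter_add_sum_filter_not univ _ _).symm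
    have h2 : ∑ f ∈ univ.filter (fun f : V6 => ¬ Psi h f = 1), Wf h f
        = ∑ f ∈ T0, Wf h f := by
      have h3 := Finset.sum_filter_add_sum_filter_not
        (univ.filter (fun f : V6 => ¬ Psi h f = 1)) (fun f => f ≠ 0) (Wf h)
      rw [Finset.filter_filter, Finset.filter_filter] at h3
      have h4 : ∑ f ∈ univ.filter fun f : V6 => (¬ Psi h f = 1) ∧ ¬ f ≠ 0, Wf h f = 0 := by
        apply Finset.sum_eq_zero
        intro f hf
        rw [mem_filter] at hf
        rw [not_not.mp hf.2.2]
        exact hW0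
      rw [← h3, h4, add_zero]
      try rfl
    rw [h1, h2]
  have hlow1 : 960 ≤ ∑ f ∈ T1, Wf h f := by
    have := Finset.card_nsmul_le_sum T1 (Wf h) 30 hb1
    rw [hcard1, smul_eq_mul] at this
    norm_num at this
    exact this
  have hlow0 : 992 ≤ ∑ f ∈ T0, Wf h f := by
    have := Finset.card_nsmul_le_sum T0 (Wf h) 32 hb0
    rw [hcard0, smul_eq_mul] at this
    norm_num at this
    exact this
  have hsum1 : ∑ f ∈ T1, Wf h f = 960 := by omega
  have hsum0 : ∑ f ∈ T0, Wf h f = 992 := by omega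
  have hAeq : ∑ f : V6, Wf h f = 1952 := by omega
  -- forcing
  have hW30 : ∀ f ∈ T1, Wf h f = 30 :=
    force_ge T1 (Wf h) 30 hb1 (by rw [hcard1, hsum1])
  have hW32 : ∀ f ∈ T0, Wf h f = 32 :=
    force_ge T0 (Wf h) 32 hb0 (by rw [hcard0, hsum0])
  have hcol_ne : ∀ i, h i ≠ 0 := by
    have hforce : ∀ i ∈ (univ : Finset (Fin 61)),
        (univ.filter fun f : V6 => dot f (h i) = 1).card = 32 :=
      force_le univ _ 32 (fun i _ => by rw [hcnt i]; split <;> omega)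
        (by rw [← hAswap, hAeq]
            try simp
            try rfl)
    intro i hz
    have := hforce i (mem_univ i)
    rw [hcnt i, if_pos hz] at this
    omega
  -- ===== second moment =====
  have hdecompSq : ∑ f : V6, Wf h f * Wf h f
      = ∑ f ∈ T1, Wf h f * Wf h f + ∑ f ∈ T0, Wf h f * Wf h f := by
    have h1 : ∑ f : V6, Wf h f * Wf h f
        = ∑ f ∈ T1, Wf h f * Wf h f
          + ∑ f ∈ univ.filter (fun f : V6 => ¬ Psi h f = 1), Wf h f * Wf h f :=
      (Finset.sum_filter_add_sum_filter_not univ _ _).symm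
    have h2 : ∑ f ∈ univ.filter (fun f : V6 => ¬ Psi h f = 1), Wf h f * Wf h f
        = ∑ f ∈ T0, Wf h f * Wf h f := by
      have h3 := Finset.sum_filter_add_sum_filter_not
        (univ.filter (fun f : V6 => ¬ Psi h f = 1)) (fun f => f ≠ 0)
        (fun f => Wf h f * Wf h f)
      rw [Finset.filter_filter, Finset.filter_filter] at h3
      have h4 : ∑ f ∈ univ.filter fun f : V6 => (¬ Psi h f = 1) ∧ ¬ f ≠ 0,
          Wf h f * Wf h f = 0 := by
        apply Finset.sum_eq_zero
        intro f hf
        rw [mem_filter] at hf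
        rw [not_not.mp hf.2.2, hW0]
        norm_num
      rw [← h3, h4, add_zero]
      try rfl
    rw [h1, h2]
  have hBtot : ∑ f : V6, Wf h f * Wf h f = 60544 := by
    have hB1 : ∑ f ∈ T1, Wf h f * Wf h f = 28800 := by
      rw [Finset.sum_congr rfl (fun f hf => by rw [hW30 f hf])]
      rw [Finset.sum_const, hcard1, smul_eq_mul]
    have hB0 : ∑ f ∈ T0, Wf h f * Wf h f = 31744 := by
      rw [Finset.sum_congr rfl (fun f hf => by rw [hW32 f hf])]
      rw [Finset.sum_const, hcard0, smul_eq_mul]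
    rw [hdecompSq, hB1, hB0]
  have hN : ∀ i j : Fin 61,
      (univ.filter fun f : V6 => dot f (h i) = 1 ∧ dot f (h j) = 1).card
        = if h i = h j then 32 else 16 := by
    intro i j
    by_cases hij : h i = h j
    · rw [if_pos hij]
      have heq : (univ.filter fun f : V6 => dot f (h i) = 1 ∧ dot f (h j) = 1)
          = (univ.filter fun f : V6 => dot f (h j) = 1) := by
        apply Finset.filter_congr
        intro f _
        rw [hij]
        exact and_self_iff
      rw [heq]
      exact count_one (h j) (hcol_ne j)
    · rw [if_neg hij]
      exact count_pair _ _ (hcol_ne i) (hcol_ne j) hij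
  have hBswap : ∑ f : V6, Wf h f * Wf h f
      = ∑ i : Fin 61, ∑ j : Fin 61,
        (univ.filter fun f : V6 => dot f (h i) = 1 ∧ dot f (h j) = 1).card := by
    have e1 : ∀ f : V6, Wf h f * Wf h f
        = ∑ i : Fin 61, ∑ j : Fin 61,
          ((if dot f (h i) = 1 then 1 else 0) * (if dot f (h j) = 1 then (1:ℕ) else 0)) := by
      intro f
      rw [hWsum f]
      exact Finset.sum_mul_sum _ _ _ _
    rw [Finset.sum_congr rfl (fun f _ => e1 f), Finset.sum_comm]
    refine Finset.sum_congr rfl (fun i _ => ?_)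
    rw [Finset.sum_comm]
    refine Finset.sum_congr rfl (fun j _ => ?_)
    rw [Finset.card_filter]
    refine Finset.sum_congr rfl (fun f _ => ?_)
    by_cases h1 : dot f (h i) = 1 <;> by_cases h2 : dot f (h j) = 1 <;> simp [h1, h2]
  have hBval : ∑ i : Fin 61, ∑ j : Fin 61, (if h i = h j then (32:ℕ) else 16) = 60544 := by
    rw [← hBtot, hBswap]
    refine Finset.sum_congr rfl (fun i _ => Finset.sum_congr rfl (fun j _ => (hN i j).symm))
  have hP : ∑ i : Fin 61, ∑ j : Fin 61, (if h i = h j then (1:ℕ) else 0) = 63 := by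
    have h60544 : ∑ i : Fin 61, ∑ j : Fin 61,
        (16 + 16 * (if h i = h j then (1:ℕ) else 0)) = 60544 := by
      rw [← hBval]
      refine Finset.sum_congr rfl (fun i _ => Finset.sum_congr rfl (fun j _ => ?_))
      by_cases hij : h i = h j <;> simp [hij]
    simp only [Finset.sum_add_distrib, Finset.sum_const, Finset.card_univ, Fintype.card_fin,
      smul_eq_mul, ← Finset.mul_sum] at h60544
    omega
  have hQ : ∑ i : Fin 61, ∑ j ∈ univ.erase i, (if h i = h j then (1:ℕ) else 0) = 2 := by
    have hdiag : ∀ i : Fin 61, ∑ j : Fin 61, (if h i = h j then (1:ℕ) else 0)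
        = 1 + ∑ j ∈ univ.erase i, (if h i = h j then (1:ℕ) else 0) := by
      intro i
      rw [← Finset.add_sum_erase univ _ (mem_univ i), if_pos rfl]
    rw [Finset.sum_congr rfl (fun i _ => hdiag i), Finset.sum_add_distrib,
      Finset.sum_const, Finset.card_univ, Fintype.card_fin, smul_eq_mul] at hP
    omega
  -- ===== the repeated column =====
  set E := (univ : Finset (Fin 61 × Fin 61)).filter
    (fun p => p.2 ≠ p.1 ∧ h p.1 = h p.2) with hEdef
  have hEcard : E.card = 2 := by
    rw [hEdef, Finset.card_filter, ← Finset.univ_product_univ, Finset.sum_product]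
    refine Eq.trans ?_ hQ
    refine Finset.sum_congr rfl (fun i _ => ?_)
    rw [← Finset.filter_ne' univ i, Finset.sum_filter]
    refine Finset.sum_congr rfl (fun j _ => ?_)
    by_cases h1 : j ≠ i <;> by_cases h2 : h i = h j <;> simp [h1, h2]
  have hEne : E.Nonempty := Finset.card_pos.mp (by omega)
  obtain ⟨⟨i0, j0⟩, hp0mem⟩ := hEne
  rw [hEdef] at hp0mem
  have hp0 : j0 ≠ i0 ∧ h i0 = h j0 := by
    have := (mem_filter.mp hp0mem).2
    exact this
  have hswapmem : ((j0, i0) : Fin 61 × Fin 61) ∈ E := by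
    rw [hEdef, mem_filter]
    exact ⟨mem_univ _, hp0.1.symm, hp0.2.symm⟩
  have hpair_ne : ((i0, j0) : Fin 61 × Fin 61) ≠ (j0, i0) := by
    intro hcon
    rw [Prod.ext_iff] at hcon
    exact hp0.1 hcon.1.symm
  have hEeq : ({((i0, j0) : Fin 61 × Fin 61), (j0, i0)} : Finset (Fin 61 × Fin 61)) = E := by
    apply Finset.eq_of_subset_of_card_le
    · intro p hp
      rcases Finset.mem_insert.mp hp with rfl | hp
      · exact hp0mem
      · rw [Finset.mem_singleton] at hp
        rw [hp]
        exact hswapmem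
    · rw [hEcard, Finset.card_insert_of_notMem (by simpa using hpair_ne),
        Finset.card_singleton]
  have huniq : ∀ i j : Fin 61, j ≠ i → h i = h j →
      (i = i0 ∧ j = j0) ∨ (i = j0 ∧ j = i0) := by
    intro i j hne heq
    have hmem : ((i, j) : Fin 61 × Fin 61) ∈ E := by
      rw [hEdef, mem_filter]
      exact ⟨mem_univ _, hne, heq⟩
    rw [← hEeq] at hmem
    rcases Finset.mem_insert.mp hmem with hc | hc
    · rw [Prod.ext_iff] at hc
      exact Or.inl hc
    · rw [Finset.mem_singleton, Prod.ext_iff] at hc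
      exact Or.inr hc
  -- injectivity off j0
  have hinj_plain : ∀ x ∈ univ.erase j0, ∀ y ∈ univ.erase j0, h x = h y → x = y := by
    intro x hx y hy heq
    rw [Finset.mem_erase] at hx hy
    by_contra hne
    rcases huniq x y (fun hcon => hne hcon.symm) heq with ⟨-, hc⟩ | ⟨hc, -⟩
    · exact hy.1 hc
    · exact hx.1 hc
  have himg : univ.image h = (univ.erase j0).image h := by
    apply Finset.Subset.antisymm
    · intro v hv
      rw [Finset.mem_image] at hv ⊢
      obtain ⟨i, -, rfl⟩ := hv
      by_cases hi : i = j0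
      · exact ⟨i0, Finset.mem_erase.mpr ⟨hp0.1.symm, mem_univ _⟩, by rw [hi, ← hp0.2]⟩
      · exact ⟨i, Finset.mem_erase.mpr ⟨hi, mem_univ _⟩, rfl⟩
    · exact Finset.image_subset_image (Finset.erase_subset _ _)
  have hcard_img : (univ.image h).card = 60 := by
    rw [himg, Finset.card_image_of_injOn (fun x hx y hy heq =>
      hinj_plain x (Finset.mem_coe.mp hx) y (Finset.mem_coe.mp hy) heq),
      Finset.card_erase_of_mem (mem_univ _), Finset.card_univ, Fintype.card_fin]
  -- the missing triple
  set Full := (univ : Finset V6).filter (fun v => v ≠ 0) with hFulldef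
  have hFullcard : Full.card = 63 := by
    have hthis := Finset.card_filter_add_card_filter_not
      (s := (univ : Finset V6)) (p := fun v => v ≠ 0)
    rw [card_univ_V6] at hthis
    have hzero : (univ.filter fun v : V6 => ¬ v ≠ 0) = {0} := by
      ext v
      simp only [mem_filter, mem_univ, true_and, mem_singleton, not_not]
    rw [hzero, Finset.card_singleton] at hthis
    rw [hFulldef]
    omega
  have hsubset : univ.image h ⊆ Full := by
    intro v hv
    rw [Finset.mem_image] at hv
    obtain ⟨i, -, rfl⟩ := hv
    rw [hFulldef, mem_filter]
    exact ⟨mem_univ _, hcol_ne i⟩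
  set M := Full \ univ.image h with hMdef
  have hMcard : M.card = 3 := by
    rw [hMdef, Finset.card_sdiff_of_subset hsubset, hFullcard, hcard_img]
  obtain ⟨a, b, c, hab, hac, hbc, hM⟩ := Finset.card_eq_three.mp hMcard
  -- ===== sums of vectors =====
  have hsum_univ : ∑ v : V6, v = 0 := by
    funext j
    rw [Finset.sum_apply]
    have h32 := card_eq32 (fun v : V6 => v j) (fun f g => rfl) (delta j) (by simp [delta])
    have hcast := sum_cast_card (fun v : V6 => v j)
    rw [h32] at hcast
    rw [← hcast]
    simp only [Pi.zero_apply]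
    exact natCast_zmod2_zero (by norm_num)
  have hsum_Full : ∑ v ∈ Full, v = 0 := by
    have hthis := Finset.sum_filter_add_sum_filter_not (univ : Finset V6)
      (fun v => v ≠ 0) (fun v => v)
    have hz : ∑ v ∈ univ.filter (fun v : V6 => ¬ v ≠ 0), v = 0 := by
      apply Finset.sum_eq_zero
      intro v hv
      rw [mem_filter] at hv
      exact not_not.mp hv.2
    rw [hz, add_zero, hsum_univ] at hthis
    rw [hFulldef]
    exact hthis
  have hsum_M : ∑ v ∈ M, v = a + b + c := by
    rw [hM, Finset.sum_insert (by simp [hab, hac]),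
      Finset.sum_insert (by simp [hbc]), Finset.sum_singleton, add_assoc]
  have hsum_img : ∑ v ∈ univ.image h, v = a + b + c := by
    have hsd := Finset.sum_sdiff (f := fun v : V6 => v) hsubset
    rw [← hMdef, hsum_M, hsum_Full] at hsd
    rw [v6_cancel hsd]
  have hcols_sum : ∑ i : Fin 61, h i = 0 := by
    have hf : ∀ f : V6, ∑ i : Fin 61, dot f (h i) = 0 := by
      intro f
      have h1 : ((Wf h f : ℕ) : ZMod 2) = ∑ i, dot f (h i) := wt_cast _
      rw [← h1]
      exact natCast_zmod2_zero (W_even h hso f)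
    funext j
    have hdj := hf (delta j)
    rw [Finset.sum_congr rfl (fun i _ => dot_delta j (h i))] at hdj
    rw [Finset.sum_apply]
    simpa using hdj
  have hq : h j0 = a + b + c := by
    have h1 := Finset.add_sum_erase univ h (mem_univ j0)
    have h2 : ∑ i ∈ univ.erase j0, h i = ∑ v ∈ (univ.erase j0).image h, v :=
      (Finset.sum_image (g := h) (f := fun v : V6 => v) hinj_plain).symm
    rw [← himg, hsum_img] at h2
    rw [h2, hcols_sum] at h1
    exact (v6_cancel h1).symm
  -- ===== key bilinear identity =====
  have hkey : ∀ f g : V6, dot f (h j0) * dot g (h j0)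
      = dot f a * dot g a + dot f b * dot g b + dot f c * dot g c := by
    intro f g
    have h1 : dot f (h j0) * dot g (h j0)
        + ∑ i ∈ univ.erase j0, dot f (h i) * dot g (h i) = 0 := by
      rw [Finset.add_sum_erase univ (fun i => dot f (h i) * dot g (h i)) (mem_univ j0)]
      exact hso f g
    have h2 : ∑ i ∈ univ.erase j0, dot f (h i) * dot g (h i)
        = ∑ v ∈ univ.image h, dot f v * dot g v := by
      rw [himg]
      exact (Finset.sum_image (g := h) (f := fun v : V6 => dot f v * dot g v)
        hinj_plain).symm
    have h3 : ∑ v ∈ M, dot f v * dot g v + ∑ v ∈ univ.image h, dot f v * dot g v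
        = ∑ v ∈ Full, dot f v * dot g v := by
      rw [hMdef]
      exact Finset.sum_sdiff hsubset
    have h4 : ∑ v ∈ Full, dot f v * dot g v = 0 := by
      have h5 : ∑ v ∈ Full, dot f v * dot g v = ∑ v : V6, dot f v * dot g v := by
        apply Finset.sum_subset (Finset.filter_subset _ _)
        intro v _ hv
        have hv0 : v = 0 := by
          by_contra hvne
          exact hv (mem_filter.mpr ⟨mem_univ v, hvne⟩)
        rw [hv0, dot_zero_right, zero_mul]
      rw [h5]
      by_cases hf0 : f = 0
      · rw [Finset.sum_congr rfl (fun v _ => by rw [hf0, dot_zero_left, zero_mul])]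
        simp
      by_cases hg0 : g = 0
      · rw [Finset.sum_congr rfl (fun v _ => by rw [hg0, dot_zero_left, mul_zero])]
        simp
      rw [Finset.sum_congr rfl (fun v _ => by rw [dot_comm f v, dot_comm g v])]
      rw [← ov_cast (fun v : V6 => dot v f) (fun v : V6 => dot v g)]
      by_cases hfg : f = g
      · have heq2 : (univ.filter fun v : V6 => dot v f = 1 ∧ dot v g = 1)
            = (univ.filter fun v : V6 => dot v g = 1) := by
          apply Finset.filter_congr
          intro v _
          rw [hfg]
          exact and_self_iff
        rw [heq2, count_one g hg0]
        exact natCast_zmod2_zero (by norm_num)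
      · rw [count_pair f g hf0 hg0 hfg]
        exact natCast_zmod2_zero (by norm_num)
    have hMs : ∑ v ∈ M, dot f v * dot g v
        = dot f a * dot g a + dot f b * dot g b + dot f c * dot g c := by
      rw [hM, Finset.sum_insert (by simp [hab, hac]),
        Finset.sum_insert (by simp [hbc]), Finset.sum_singleton, add_assoc]
    rw [h2] at h1
    rw [h4] at h3
    rw [zmod2_cancel h3, hMs] at h1
    exact (zmod2_cancel h1).symm
  -- ===== final contradiction =====
  obtain ⟨j1, hj1⟩ := Function.ne_iff.mp hab
  obtain ⟨j2, hj2⟩ := Function.ne_iff.mp hac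
  obtain ⟨j3, hj3⟩ := Function.ne_iff.mp hbc
  obtain ⟨s1, s2, s3, t1, t2, t3, hne⟩ := key3 (a j1) (b j1) (c j1) (a j2) (b j2) (c j2)
    (a j3) (b j3) (c j3) hj1 hj2 hj3
  apply hne
  set f : V6 := fun k => s1 * delta j1 k + s2 * delta j2 k + s3 * delta j3 k with hfdef
  set g : V6 := fun k => t1 * delta j1 k + t2 * delta j2 k + t3 * delta j3 k with hgdef
  have hfa : dot f a = s1 * a j1 + s2 * a j2 + s3 * a j3 := dot_combo _ _ _ _ _ _ _
  have hfb : dot f b = s1 * b j1 + s2 * b j2 + s3 * b j3 := dot_combo _ _ _ _ _ _ _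
  have hfc : dot f c = s1 * c j1 + s2 * c j2 + s3 * c j3 := dot_combo _ _ _ _ _ _ _
  have hga : dot g a = t1 * a j1 + t2 * a j2 + t3 * a j3 := dot_combo _ _ _ _ _ _ _
  have hgb : dot g b = t1 * b j1 + t2 * b j2 + t3 * b j3 := dot_combo _ _ _ _ _ _ _
  have hgc : dot g c = t1 * c j1 + t2 * c j2 + t3 * c j3 := dot_combo _ _ _ _ _ _ _
  have hfinal := hkey f g
  rw [hq, dot_add_right, dot_add_right, dot_add_right, dot_add_right] at hfinal
  rw [hfa, hfb, hfc, hga, hgb, hgc] at hfinal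
  exact hfinal



theorem stmt13 :
    ¬ ∃ C : Submodule (ZMod 2) (Fin 61 → ZMod 2),
      Module.finrank (ZMod 2) C = 6 ∧ SelfOrthogonal C ∧ HasMinDist C 30 := by
  rintro ⟨C, hrank, hSO, ⟨⟨x0, hx0C, hx0ne, hx0wt⟩, hmin⟩⟩
  have : Module.Finite (ZMod 2) C := inferInstance
  let b : Module.Basis (Fin 6) (ZMod 2) C := Module.finBasisOfFinrankEq (ZMod 2) C hrank
  let e : C ≃ₗ[ZMod 2] (Fin 6 → ZMod 2) := b.equivFun
  -- columns
  let h : Fin 61 → V6 := fun i => fun j => (b j : Fin 61 → ZMod 2) i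
  have hcw : ∀ f : V6, ∀ i : Fin 61,
      ((e.symm f : C) : Fin 61 → ZMod 2) i = dot f (h i) := by
    intro f i
    rw [show e.symm f = ∑ j, f j • b j from b.equivFun_symm_apply f]
    rw [show ((∑ j, f j • b j : C) : Fin 61 → ZMod 2) = ∑ j, f j • ((b j : C) : Fin 61 → ZMod 2)
      from by push_cast; rfl]
    rw [Finset.sum_apply]
    exact Finset.sum_congr rfl (fun j _ => rfl)
  have hcvec : ∀ f : V6, ((e.symm f : C) : Fin 61 → ZMod 2) = fun i => dot f (h i) :=
    fun f => funext (hcw f)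
  apply core h
  · intro f g
    have := hSO ((e.symm f : C) : Fin 61 → ZMod 2) (e.symm f).2
      ((e.symm g : C) : Fin 61 → ZMod 2) (e.symm g).2
    rw [hcvec f, hcvec g] at this
    exact this
  · intro f hfne
    have hne : ((e.symm f : C) : Fin 61 → ZMod 2) ≠ 0 := by
      intro hcon
      apply hfne
      have h1 : e.symm f = 0 := Subtype.ext hcon
      have h2 := congrArg e h1
      rw [LinearEquiv.apply_symm_apply, map_zero] at h2
      exact h2
    have := hmin _ (e.symm f).2 hne
    rw [hcvec f] at this
    rw [Wf]
    exact this
  · refine ⟨e ⟨x0, hx0C⟩, ?_, ?_⟩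
    · intro hcon
      apply hx0ne
      have h1 := congrArg e.symm hcon
      rw [LinearEquiv.symm_apply_apply, map_zero] at h1
      exact congrArg Subtype.val h1
    · rw [Wf]
      have h1 : e.symm (e ⟨x0, hx0C⟩) = ⟨x0, hx0C⟩ := e.symm_apply_apply _
      have h2 := hcvec (e ⟨x0, hx0C⟩)
      rw [h1] at h2
      rw [← h2]
      exact hx0wt
end
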